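/- Let F be a perfect field, k a field extension of F, A a commutative F-algebra, and f : A → k a surjective F-algebra homomorphism whose kernel is a nilpotent ideal. Then f admits a ring-homomorphism section: there exists a ring homomorphism g : k → A with f ∘ g = id_k. -/

import Mathlib

open Polynomial

section Aux

variable {A : Type*} [CommRing A] {k : Type*} [Field k]

lemma aux_mul_ker_eq_zero {f : A →+* k} (h2 : RingHom.ker f ^ 2 = ⊥) {x y : A}
    (hx : f x = 0) (hy : f y = 0) : x * y = 0 := by
  have hx' : x ∈ RingHom.ker f := RingHom.mem_ker.mpr hx
  have hy' : y ∈ RingHom.ker f := RingHom.mem_ker.mpr hy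
  have : x * y ∈ RingHom.ker f ^ 2 := by
    rw [pow_two]; exact Ideal.mul_mem_mul hx' hy'
  rw [h2] at this
  exact Ideal.mem_bot.mp this

lemma aux_isUnit {f : A →+* k} (hf : Function.Surjective f) (h2 : RingHom.ker f ^ 2 = ⊥)
    {a : A} (ha : f a ≠ 0) : IsUnit a := by
  obtain ⟨b, hb⟩ := hf (f a)⁻¹
  have hν : f (1 - a * b) = 0 := by
    rw [map_sub, map_one, map_mul, hb, mul_inv_cancel₀ ha, sub_self]
  have h0 : (1 - a * b) * (1 - a * b) = 0 := aux_mul_ker_eq_zero h2 hν hν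
  refine IsUnit.of_mul_eq_one (a := a) (b * (2 - a * b)) ?_
  linear_combination -h0

lemma aux_fieldify (f : A →+* k) (hloc : ∀ a : A, f a ≠ 0 → IsUnit a) (hnt : (0 : A) ≠ 1)
    (R : Subring A) (hinj : ∀ x ∈ R, f x = 0 → x = 0) :
    ∃ K' : Subring A, R ≤ K' ∧ IsField ↥K' := by
  refine ⟨{  carrier := {a | ∃ r ∈ R, ∃ s ∈ R, f s ≠ 0 ∧ a * s = r}
             one_mem' := ⟨1, R.one_mem, 1, R.one_mem, by simp, by simp⟩
             zero_mem' := ⟨0, R.zero_mem, 1, R.one_mem, by simp, by simp⟩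
             mul_mem' := ?_
             add_mem' := ?_
             neg_mem' := ?_ }, ?_, ?_⟩
  · rintro a a' ⟨r, hr, s, hs, hfs, he⟩ ⟨r', hr', s', hs', hfs', he'⟩
    refine ⟨r * r', R.mul_mem hr hr', s * s', R.mul_mem hs hs',
      by rw [map_mul]; exact mul_ne_zero hfs hfs', ?_⟩
    calc a * a' * (s * s') = (a * s) * (a' * s') := by ring
    _ = r * r' := by rw [he, he']
  · rintro a a' ⟨r, hr, s, hs, hfs, he⟩ ⟨r', hr', s', hs', hfs', he'⟩
    refine ⟨r * s' + r' * s, R.add_mem (R.mul_mem hr hs') (R.mul_mem hr' hs),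
      s * s', R.mul_mem hs hs', by rw [map_mul]; exact mul_ne_zero hfs hfs', ?_⟩
    calc (a + a') * (s * s') = (a * s) * s' + (a' * s') * s := by ring
    _ = r * s' + r' * s := by rw [he, he']
  · rintro a ⟨r, hr, s, hs, hfs, he⟩
    exact ⟨-r, R.neg_mem hr, s, hs, hfs, by rw [neg_mul, he]⟩
  · intro x hx
    exact ⟨x, hx, 1, R.one_mem, by simp, by simp⟩
  · constructor
    · exact ⟨0, 1, fun h => hnt (congrArg Subtype.val h)⟩
    · exact fun a b => mul_comm a b
    · rintro ⟨a, r, hr, s, hs, hfs, he⟩ ha0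
      have haA : a ≠ 0 := fun h => ha0 (Subtype.ext h)
      have hr0 : r ≠ 0 := by
        rintro rfl
        have hsu : IsUnit s := hloc s hfs
        obtain ⟨u, rfl⟩ := hsu
        exact haA ((Units.mul_left_eq_zero u).mp he)
      have hfr : f r ≠ 0 := fun h => hr0 (hinj r hr h)
      have hru : IsUnit r := hloc r hfr
      refine ⟨⟨s * ↑hru.unit⁻¹, s, hs, r, hr, hfr, ?_⟩, ?_⟩
      · rw [mul_assoc]
        simp [IsUnit.unit_spec]
      · apply Subtype.ext
        show a * (s * ↑hru.unit⁻¹) = 1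
        rw [← mul_assoc, he]
        simp

lemma aux_zorn (S₀ : Subring A) (h₀ : IsField ↥S₀) (hnt : (0 : A) ≠ 1) :
    ∃ K : Subring A, Maximal (fun S : Subring A => S₀ ≤ S ∧ IsField ↥S) K := by
  have hchains : ∀ c ⊆ {S : Subring A | S₀ ≤ S ∧ IsField ↥S}, IsChain (· ≤ ·) c →
      ∀ y ∈ c, ∃ ub ∈ {S : Subring A | S₀ ≤ S ∧ IsField ↥S}, ∀ z ∈ c, z ≤ ub := ?_
  · obtain ⟨m, _, hm⟩ := zorn_le_nonempty₀ {S : Subring A | S₀ ≤ S ∧ IsField ↥S} hchains S₀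
      ⟨le_rfl, h₀⟩
    exact ⟨m, hm⟩
  intro c hc hchain y hy
  have hne : c.Nonempty := ⟨y, hy⟩
  have hdir := hchain.directedOn
  have hmem : ∀ x : A, x ∈ sSup c ↔ ∃ S ∈ c, x ∈ S := fun x =>
    Subring.mem_sSup_of_directedOn hne hdir
  refine ⟨sSup c, ⟨(hc hy).1.trans (le_sSup hy), ?_⟩, fun z hz => le_sSup hz⟩
  constructor
  · exact ⟨0, 1, fun h => hnt (congrArg Subtype.val h)⟩
  · exact fun a b => mul_comm a b
  · intro a ha
    obtain ⟨S, hSc, haS⟩ := (hmem a.1).mp a.2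
    have hSfield := (hc hSc).2
    have hane : (⟨a.1, haS⟩ : ↥S) ≠ 0 := by
      intro h
      apply ha
      have h' := congrArg Subtype.val h
      apply Subtype.ext
      simpa using h'
    obtain ⟨b, hb⟩ := hSfield.mul_inv_cancel hane
    refine ⟨⟨b.1, le_sSup hSc b.2⟩, ?_⟩
    have h' := congrArg Subtype.val hb
    apply Subtype.ext
    simpa using h'

lemma aux_sec_of_surj (f : A →+* k) (K : Subring A) (hK : IsField ↥K)
    (hs : Function.Surjective (f.comp K.subtype)) :
    ∃ g : k →+* A, f.comp g = RingHom.id k := by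
  letI := hK.toField
  have hinj : Function.Injective (f.comp K.subtype) := (f.comp K.subtype).injective
  let e := RingEquiv.ofBijective _ ⟨hinj, hs⟩
  refine ⟨K.subtype.comp e.symm.toRingHom, ?_⟩
  ext x
  show f (K.subtype (e.symm x)) = x
  have : (f.comp K.subtype) (e.symm x) = e (e.symm x) := rfl
  rw [show f (K.subtype (e.symm x)) = (f.comp K.subtype) (e.symm x) from rfl, this,
    e.apply_symm_apply]

end Aux
section Grow

variable {A : Type*} [CommRing A] {k : Type*} [Field k]

lemma aux_grow (f : A →+* k) (hloc : ∀ a : A, f a ≠ 0 → IsUnit a) (hnt : (0 : A) ≠ 1)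
    (S₀ : Subring A) (h₀ : IsField ↥S₀)
    (H : ∀ K : Subring A, S₀ ≤ K → IsField ↥K → ¬Function.Surjective (f.comp K.subtype) →
        ∃ z : A, f z ∉ Set.range (f.comp K.subtype) ∧
          ∀ P : Polynomial ↥K, Polynomial.eval₂ (f.comp K.subtype) (f z) P = 0 →
            Polynomial.eval₂ K.subtype z P = 0) :
    ∃ K : Subring A, IsField ↥K ∧ Function.Surjective (f.comp K.subtype) := by
  obtain ⟨K, hmax⟩ := aux_zorn S₀ h₀ hnt
  refine ⟨K, hmax.1.2, ?_⟩
  by_contra hns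
  obtain ⟨z, hz1, hz2⟩ := H K hmax.1.1 hmax.1.2 hns
  set R : Subring A := (Polynomial.eval₂RingHom K.subtype z).range with hR
  have hKR : K ≤ R := by
    intro x hx
    exact ⟨Polynomial.C ⟨x, hx⟩, Polynomial.eval₂_C _ _⟩
  have hzR : z ∈ R := ⟨Polynomial.X, Polynomial.eval₂_X _ _⟩
  have hinj : ∀ x ∈ R, f x = 0 → x = 0 := by
    rintro _ ⟨P, rfl⟩ h
    show Polynomial.eval₂ K.subtype z P = 0
    apply hz2
    have := Polynomial.hom_eval₂ P K.subtype f z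
    rw [Polynomial.coe_eval₂RingHom] at h
    rw [← this]
    exact h
  obtain ⟨K', hRK', hK'⟩ := aux_fieldify f hloc hnt R hinj
  have hKK' : K ≤ K' := hKR.trans hRK'
  have hle : K' ≤ K := hmax.2 ⟨hmax.1.1.trans hKK', hK'⟩ hKK'
  exact hz1 ⟨⟨z, hle (hRK' hzR)⟩, rfl⟩

end Grow
section Translate

open Polynomial

variable {A : Type*} [CommRing A] {k : Type*} [Field k]

lemma aux_rrF_surj {K' : Type*} [Field K'] (ψ : K' →+* k) :
    Function.Surjective ψ.rangeRestrictField := by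
  rintro ⟨y, hy⟩
  obtain ⟨x, hx⟩ := RingHom.mem_fieldRange.mp hy
  exact ⟨x, Subtype.ext (by simpa [RingHom.coe_rangeRestrictField] using hx)⟩

lemma aux_translate {K' : Type*} [Field K'] (ψ : K' →+* k) (t : k) (P : K'[X]) :
    Polynomial.eval₂ ψ t P = Polynomial.aeval t (P.map ψ.rangeRestrictField) := by
  have hcomp : (algebraMap ↥ψ.fieldRange k).comp ψ.rangeRestrictField = ψ := by
    ext x
    exact ψ.coe_rangeRestrictField x
  rw [Polynomial.aeval_def, Polynomial.eval₂_map, hcomp]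

lemma aux_inj_of_root {K' : Type*} [Field K'] (ψ : K' →+* k) (ι : K' →+* A)
    (t : k) (z : A) (MK : K'[X]) (hroot : Polynomial.eval₂ ι z MK = 0)
    (hMm : MK.map ψ.rangeRestrictField = minpoly ↥ψ.fieldRange t) :
    ∀ P : K'[X], Polynomial.eval₂ ψ t P = 0 → Polynomial.eval₂ ι z P = 0 := by
  intro P hP
  rw [aux_translate] at hP
  have hdvd : minpoly ↥ψ.fieldRange t ∣ P.map ψ.rangeRestrictField := minpoly.dvd _ _ hP
  rw [← hMm] at hdvd
  obtain ⟨Qb, hQb⟩ := hdvd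
  obtain ⟨Q, rfl⟩ := Polynomial.map_surjective _ (aux_rrF_surj ψ) Qb
  rw [← Polynomial.map_mul] at hQb
  have hPQ : P = MK * Q :=
    Polynomial.map_injective _ ψ.rangeRestrictField.injective hQb
  rw [hPQ, Polynomial.eval₂_mul, hroot, zero_mul]

end Translate
section Char0

open Polynomial

variable {A : Type*} [CommRing A] {k : Type*} [Field k]

lemma aux_char0_H [CharZero k] (f : A →+* k) (hf : Function.Surjective f)
    (h2 : RingHom.ker f ^ 2 = ⊥) (K : Subring A) (hK : IsField ↥K)
    (hns : ¬Function.Surjective (f.comp K.subtype)) :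
    ∃ z : A, f z ∉ Set.range (f.comp K.subtype) ∧
      ∀ P : Polynomial ↥K, Polynomial.eval₂ (f.comp K.subtype) (f z) P = 0 →
        Polynomial.eval₂ K.subtype z P = 0 := by
  letI := hK.toField
  set ψ : ↥K →+* k := f.comp K.subtype with hψ
  simp only [Function.Surjective, not_forall] at hns
  obtain ⟨t, ht⟩ := hns
  have htr : t ∉ Set.range ψ := by
    rintro ⟨a, ha⟩
    exact ht ⟨a, ha⟩
  letI : CharZero ↥ψ.fieldRange :=
    ⟨fun a b h => Nat.cast_injective (R := k)
      (by rw [← map_natCast ψ.fieldRange.subtype a, ← map_natCast ψ.fieldRange.subtype b, h])⟩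
  by_cases halg : IsAlgebraic ↥ψ.fieldRange t
  · -- separable algebraic case: Newton/Hensel lifting
    have hint : IsIntegral ↥ψ.fieldRange t := halg.isIntegral
    set m := minpoly ↥ψ.fieldRange t with hm
    have hsep : m.Separable := (minpoly.irreducible hint).separable
    have hm't : Polynomial.aeval t (derivative m) ≠ 0 := by
      obtain ⟨a, b, hab⟩ := hsep
      have hthis := congrArg (Polynomial.aeval t) hab
      rw [hm] at hthis
      simp only [map_add, map_mul, map_one, minpoly.aeval, mul_zero, zero_add] at hthis
      intro h
      rw [← hm, h, mul_zero] at hthis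
      exact zero_ne_one (α := k) hthis
    set χ := ψ.rangeRestrictField with hχ
    have hbij : Function.Bijective χ := ⟨χ.injective, aux_rrF_surj ψ⟩
    set e := RingEquiv.ofBijective χ hbij with he
    set MK : Polynomial ↥K := m.map (e.symm : ↥ψ.fieldRange →+* ↥K) with hMK
    have hcompid : ∀ N : Polynomial ↥ψ.fieldRange,
        (N.map (e.symm : ↥ψ.fieldRange →+* ↥K)).map χ = N := by
      intro N
      rw [Polynomial.map_map]
      have : χ.comp (e.symm : ↥ψ.fieldRange →+* ↥K) = RingHom.id _ := by
        ext x
        exact congrArg Subtype.val (e.apply_symm_apply x)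
      rw [this, Polynomial.map_id]
    have hMm : MK.map χ = m := hcompid m
    obtain ⟨z₀, hz₀⟩ := hf t
    set c := Polynomial.eval₂ K.subtype z₀ MK with hc
    have hfc : f c = 0 := by
      rw [hc, Polynomial.hom_eval₂, hz₀, ← hψ, aux_translate ψ t MK, hMm, hm, minpoly.aeval]
    set u := Polynomial.eval₂ K.subtype z₀ (derivative MK) with hu
    have hfu : f u ≠ 0 := by
      rw [hu, Polynomial.hom_eval₂, hz₀, ← hψ, aux_translate ψ t (derivative MK), hMK,
        Polynomial.derivative_map, hcompid]
      exact hm't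
    have huu : IsUnit u := aux_isUnit hf h2 hfu
    set h : A := -(c * ↑huu.unit⁻¹) with hh
    have hfh : f h = 0 := by
      rw [hh, map_neg, map_mul, hfc, zero_mul, neg_zero]
    set z := z₀ + h with hz
    have hfz : f z = t := by
      rw [hz, map_add, hfh, add_zero, hz₀]
    set MA : Polynomial A := MK.map K.subtype with hMA
    have hMAe : ∀ x : A, MA.eval x = Polynomial.eval₂ K.subtype x MK := fun x =>
      Polynomial.eval_map _ _
    have hMA'e : ∀ x : A, (derivative MA).eval x = Polynomial.eval₂ K.subtype x (derivative MK) :=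
      fun x => by rw [hMA, Polynomial.derivative_map, Polynomial.eval_map]
    have hroot : Polynomial.eval₂ K.subtype z MK = 0 := by
      obtain ⟨q, hq⟩ := MA.binomExpansion z₀ h
      have hsq : h * h = 0 := aux_mul_ker_eq_zero h2 hfh hfh
      have huinv : u * ↑huu.unit⁻¹ = 1 := huu.mul_val_inv
      rw [← hMAe, hq, hMAe, hMA'e, ← hc, ← hu, pow_two, hsq, mul_zero, add_zero, hh]
      linear_combination (-c) * huinv
    refine ⟨z, by rwa [hfz], ?_⟩
    intro P hP
    rw [hfz] at hP
    exact aux_inj_of_root ψ K.subtype t z MK hroot hMm P hP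
  · -- transcendental case
    obtain ⟨z, hz⟩ := hf t
    refine ⟨z, by rwa [hz], ?_⟩
    intro P hP
    rw [hz] at hP
    rw [aux_translate] at hP
    have hmap0 : P.map ψ.rangeRestrictField = 0 := by
      by_contra hne
      exact halg ⟨P.map ψ.rangeRestrictField, hne, hP⟩
    have : P = 0 := Polynomial.map_injective _ ψ.rangeRestrictField.injective (by simpa using hmap0)
    simp [this]

end Char0
section CharPcase

open Polynomial

variable {A : Type*} [CommRing A] {k : Type*} [Field k]

lemma aux_charp_H (p : ℕ) [Fact p.Prime] [CharP k p] [CharP A p] (f : A →+* k)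
    (hf : Function.Surjective f) (h2 : RingHom.ker f ^ 2 = ⊥) (K : Subring A)
    (hS₀K : (frobenius A p).range ≤ K) (hK : IsField ↥K)
    (hns : ¬Function.Surjective (f.comp K.subtype)) :
    ∃ z : A, f z ∉ Set.range (f.comp K.subtype) ∧
      ∀ P : Polynomial ↥K, Polynomial.eval₂ (f.comp K.subtype) (f z) P = 0 →
        Polynomial.eval₂ K.subtype z P = 0 := by
  have hp : p.Prime := Fact.out
  letI := hK.toField
  set ψ : ↥K →+* k := f.comp K.subtype with hψ
  simp only [Function.Surjective, not_forall] at hns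
  obtain ⟨t, ht⟩ := hns
  have htr : t ∉ Set.range ψ := by
    rintro ⟨a, ha⟩
    exact ht ⟨a, ha⟩
  obtain ⟨z, hz⟩ := hf t
  have hwK : z ^ p ∈ K := hS₀K ⟨z, rfl⟩
  set w : ↥K := ⟨z ^ p, hwK⟩ with hw
  set χ := ψ.rangeRestrictField with hχ
  set MK : Polynomial ↥K := X ^ p - C w with hMK
  have hroot : Polynomial.eval₂ K.subtype z MK = 0 := by
    rw [hMK, Polynomial.eval₂_sub, Polynomial.eval₂_pow, Polynomial.eval₂_X,
      Polynomial.eval₂_C]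
    show z ^ p - z ^ p = 0
    ring
  set s : ↥ψ.fieldRange := χ w with hs
  have hsval : (s : k) = t ^ p := by
    rw [hs, ψ.coe_rangeRestrictField]
    show f (z ^ p) = t ^ p
    rw [map_pow, hz]
  have hmapMK : MK.map χ = X ^ p - C s := by
    rw [hMK]
    simp [Polynomial.map_sub, Polynomial.map_pow, Polynomial.map_X, Polynomial.map_C]
    exact hs.symm
  have haev : Polynomial.aeval t ((X : Polynomial ↥ψ.fieldRange) ^ p - C s) = 0 := by
    rw [map_sub, map_pow, Polynomial.aeval_X, Polynomial.aeval_C]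
    show t ^ p - (s : k) = 0
    rw [hsval, sub_self]
  have hmonic : ((X : Polynomial ↥ψ.fieldRange) ^ p - C s).Monic :=
    Polynomial.monic_X_pow_sub_C s hp.ne_zero
  have hint : IsIntegral ↥ψ.fieldRange t := ⟨_, hmonic, haev⟩
  set m := minpoly ↥ψ.fieldRange t with hm
  have hdvd : m ∣ (X : Polynomial ↥ψ.fieldRange) ^ p - C s := minpoly.dvd _ _ haev
  -- pass to k[X]
  set ι : ↥ψ.fieldRange →+* k := algebraMap ↥ψ.fieldRange k with hι
  haveI : CharP (Polynomial k) p := charP_of_injective_ringHom (Polynomial.C_injective) p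
  have hfactor : ((X : Polynomial ↥ψ.fieldRange) ^ p - C s).map ι
      = ((X : Polynomial k) - C t) ^ p := by
    rw [Polynomial.map_sub, Polynomial.map_pow, Polynomial.map_X, Polynomial.map_C]
    rw [sub_pow_char]
    show (X : Polynomial k) ^ p - C (ι s) = X ^ p - (C t) ^ p
    rw [← Polynomial.C_pow]
    congr 1
    exact congrArg Polynomial.C hsval
  have hdvd2 : m.map ι ∣ ((X : Polynomial k) - C t) ^ p := by
    rw [← hfactor]
    exact Polynomial.map_dvd ι hdvd
  obtain ⟨i, hip, hassoc⟩ := (dvd_prime_pow (Polynomial.prime_X_sub_C t) p).mp hdvd2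
  have hmk : m.map ι = ((X : Polynomial k) - C t) ^ i :=
    Polynomial.eq_of_monic_of_associated ((minpoly.monic hint).map ι)
      ((Polynomial.monic_X_sub_C t).pow i) hassoc
  have hideg : i = m.natDegree := by
    have h1 : (m.map ι).natDegree = m.natDegree := (minpoly.monic hint).natDegree_map ι
    have h2' : (((X : Polynomial k) - C t) ^ i).natDegree = i := by
      rw [Polynomial.natDegree_pow, Polynomial.natDegree_X_sub_C, mul_one]
    rw [← h1, hmk, h2']
  have hipos : 0 < i := hideg ▸ minpoly.natDegree_pos hint
  have hieq : i = p := by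
    by_contra hne
    have hilt : i < p := lt_of_le_of_ne hip hne
    obtain ⟨j, rfl⟩ := Nat.exists_eq_add_of_lt hipos
    rw [zero_add] at *
    -- coefficient of X^j in (X - C t)^(j+1) is -(j+1) * t
    have hco : (m.map ι).coeff j = -t * ((j + 1 : ℕ) : k) := by
      rw [hmk, sub_eq_add_neg, ← Polynomial.C_neg, Polynomial.coeff_X_add_C_pow]
      rw [Nat.add_sub_cancel_left, Nat.choose_succ_self_right, pow_one]
    have hmem : -t * ((j + 1 : ℕ) : k) ∈ ψ.fieldRange := by
      rw [← hco, Polynomial.coeff_map]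
      exact SetLike.coe_mem (m.coeff j)
    have hine : ((j + 1 : ℕ) : k) ≠ 0 := by
      rw [Ne, CharP.cast_eq_zero_iff k p]
      exact Nat.not_dvd_of_pos_of_lt (Nat.succ_pos j) hilt
    have htL : t ∈ ψ.fieldRange := by
      have hteq : t = -((j + 1 : ℕ) : k)⁻¹ * (-t * ((j + 1 : ℕ) : k)) := by
        have hx : -((j + 1 : ℕ) : k)⁻¹ * (-t * ((j + 1 : ℕ) : k))
            = t * (((j + 1 : ℕ) : k) * ((j + 1 : ℕ) : k)⁻¹) := by ring
        rw [hx, mul_inv_cancel₀ hine, mul_one]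
      rw [hteq]
      exact Subfield.mul_mem _ (Subfield.neg_mem _ (Subfield.inv_mem _
        (natCast_mem _ _))) hmem
    obtain ⟨x, hx⟩ := RingHom.mem_fieldRange.mp htL
    exact htr ⟨x, hx⟩
  -- now m = X^p - C s
  have hMm : MK.map χ = m := by
    rw [hmapMK]
    obtain ⟨c, hc⟩ := hdvd
    have hmdeg : m.natDegree = p := by rw [← hideg, hieq]
    have hXdeg : ((X : Polynomial ↥ψ.fieldRange) ^ p - C s).natDegree = p :=
      Polynomial.natDegree_X_pow_sub_C
    have hc0 : c ≠ 0 := by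
      rintro rfl
      rw [mul_zero] at hc
      exact hmonic.ne_zero hc
    have hcdeg : c.natDegree = 0 := by
      have := Polynomial.natDegree_mul (minpoly.ne_zero hint) hc0
      rw [← hc, hXdeg, hmdeg] at this
      omega
    have hcC : c = C (c.coeff 0) := Polynomial.eq_C_of_natDegree_eq_zero hcdeg
    have hlead : c.coeff 0 = 1 := by
      have := congrArg Polynomial.leadingCoeff hc
      rw [hmonic.leadingCoeff, Polynomial.leadingCoeff_mul, (minpoly.monic hint).leadingCoeff,
        one_mul] at this
      rw [Polynomial.leadingCoeff, hcdeg] at this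
      exact this.symm
    rw [hc, hcC, hlead, Polynomial.C_1, mul_one]
  refine ⟨z, by rwa [hz], ?_⟩
  intro P hP
  rw [hz] at hP
  exact aux_inj_of_root ψ K.subtype t z MK hroot hMm P hP

end CharPcase
section MainSq

open Polynomial

variable {A : Type*} [CommRing A] {k : Type*} [Field k]

lemma aux_isField_range {F : Type*} [Field F] (φ : F →+* A) (hnt : (0 : A) ≠ 1) :
    IsField ↥φ.range := by
  refine ⟨⟨0, 1, fun h => hnt (congrArg Subtype.val h)⟩, fun a b => mul_comm a b, ?_⟩
  rintro ⟨x, q, rfl⟩ hx0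
  have hq : q ≠ 0 := by
    rintro rfl
    apply hx0
    apply Subtype.ext
    simpa using map_zero φ
  refine ⟨⟨φ q⁻¹, q⁻¹, rfl⟩, ?_⟩
  apply Subtype.ext
  show φ q * φ q⁻¹ = 1
  rw [← map_mul, mul_inv_cancel₀ hq, map_one]

theorem aux_sec_sq (f : A →+* k) (hf : Function.Surjective f)
    (h2 : RingHom.ker f ^ 2 = ⊥) (hchar : ∀ n : ℕ, (n : A) = 0 ↔ (n : k) = 0) :
    ∃ g : k →+* A, f.comp g = RingHom.id k := by
  have hnt : (0 : A) ≠ 1 := by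
    intro h
    have h' := congrArg f h
    rw [map_zero, map_one] at h'
    exact zero_ne_one h'
  have hloc : ∀ a : A, f a ≠ 0 → IsUnit a := fun a ha => aux_isUnit hf h2 ha
  rcases CharP.char_is_prime_or_zero k (ringChar k) with hp | h0
  · -- characteristic p
    set p := ringChar k with hpdef
    haveI : Fact p.Prime := ⟨hp⟩
    haveI : CharP k p := ringChar.charP k
    haveI : CharP A p := ⟨fun n => (hchar n).trans (CharP.cast_eq_zero_iff k _ n)⟩
    set S₀ : Subring A := (frobenius A p).range with hS₀
    have h₀ : IsField ↥S₀ := by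
      refine ⟨⟨0, 1, fun h => hnt (congrArg Subtype.val h)⟩, fun a b => mul_comm a b, ?_⟩
      rintro ⟨x, a, rfl⟩ hx0
      have hfa : f a ≠ 0 := by
        intro h
        apply hx0
        apply Subtype.ext
        show frobenius A p a = 0
        have haa : a * a = 0 := aux_mul_ker_eq_zero h2 h h
        have : a ^ p = a ^ 2 * a ^ (p - 2) := by
          rw [← pow_add]
          congr 1
          have := hp.two_le
          omega
        rw [frobenius_def, this, pow_two, haa, zero_mul]
      have hu : IsUnit a := hloc a hfa
      refine ⟨⟨frobenius A p ↑hu.unit⁻¹, _, rfl⟩, ?_⟩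
      apply Subtype.ext
      show frobenius A p a * frobenius A p ↑hu.unit⁻¹ = 1
      rw [← map_mul, hu.mul_val_inv, map_one]
    obtain ⟨K, hK, hKs⟩ := aux_grow f hloc hnt S₀ h₀
      (fun K hS₀K hK hns => aux_charp_H p f hf h2 K hS₀K hK hns)
    exact aux_sec_of_surj f K hK hKs
  · -- characteristic zero
    haveI : CharP k 0 := h0 ▸ ringChar.charP k
    haveI : CharZero k := CharP.charP_to_charZero k
    have hA : ∀ y : nonZeroDivisors ℤ, IsUnit (((y : ℤ) : A)) := by
      intro y
      apply hloc
      rw [map_intCast]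
      exact Int.cast_ne_zero.mpr (nonZeroDivisors.coe_ne_zero y)
    set φ : ℚ →+* A := IsLocalization.lift (M := nonZeroDivisors ℤ) (S := ℚ)
      (g := Int.castRingHom A) (fun y => by simpa using hA y) with hφ
    obtain ⟨K, hK, hKs⟩ := aux_grow f hloc hnt φ.range (aux_isField_range φ hnt)
      (fun K _ hK hns => aux_char0_H f hf h2 K hK hns)
    exact aux_sec_of_surj f K hK hKs

end MainSq
section Devissage

universe u v

lemma aux_devissage {k : Type v} [Field k] :
    ∀ (n : ℕ) (A : Type u) [CommRing A] (f : A →+* k),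
      Function.Surjective f → (∀ m : ℕ, (m : A) = 0 ↔ (m : k) = 0) →
      RingHom.ker f ^ n = ⊥ → ∃ g : k →+* A, f.comp g = RingHom.id k := by
  intro n
  induction n using Nat.strong_induction_on with
  | _ n ih =>
    intro A _ f hf hchar hker
    match n, ih with
    | 0, _ => 
      exfalso
      have h1 : (1 : A) ∈ (RingHom.ker f ^ 0) := by
        rw [pow_zero, Ideal.one_eq_top]
        trivial
      rw [hker] at h1
      have h10 : (1 : A) = 0 := Ideal.mem_bot.mp h1
      have := congrArg f h10
      rw [map_one, map_zero] at this
      exact one_ne_zero this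
    | 1, _ =>
      rw [pow_one] at hker
      have hinj : Function.Injective f := (RingHom.injective_iff_ker_eq_bot f).mpr hker
      let e := RingEquiv.ofBijective f ⟨hinj, hf⟩
      refine ⟨e.symm.toRingHom, ?_⟩
      ext x
      exact e.apply_symm_apply x
    | (m + 2), ih =>
      set J : Ideal A := RingHom.ker f ^ (m + 1) with hJ
      have hJle : J ≤ RingHom.ker f := Ideal.pow_le_self (by omega)
      have hJle' : ∀ a ∈ J, f a = 0 := fun a ha => RingHom.mem_ker.mp (hJle ha)
      set π : A →+* A ⧸ J := Ideal.Quotient.mk J with hπ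
      set fb : A ⧸ J →+* k := Ideal.Quotient.lift J f hJle with hfb
      have hfbπ : ∀ a : A, fb (π a) = f a := fun a => Ideal.Quotient.lift_mk J f hJle
      have hfbs : Function.Surjective fb := by
        intro x
        obtain ⟨a, ha⟩ := hf x
        exact ⟨π a, by rw [hfbπ, ha]⟩
      have hcharB : ∀ m' : ℕ, (m' : A ⧸ J) = 0 ↔ (m' : k) = 0 := by
        intro m'
        constructor
        · intro h
          rw [← map_natCast fb m', h, map_zero]
        · intro h
          rw [← map_natCast π m', (hchar m').mpr h, map_zero]
      have hkerb : RingHom.ker fb ^ (m + 1) = ⊥ := by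
        rw [hfb, Ideal.ker_quotient_lift, ← Ideal.map_pow, ← hJ, ← hπ,
          Ideal.map_quotient_self]
      obtain ⟨s, hs⟩ := ih (m + 1) (by omega) (A ⧸ J) fb hfbs hcharB hkerb
      have hsval : ∀ x : k, fb (s x) = x := fun x => by
        have := congrArg (fun h => h x) (congrArg DFunLike.coe hs)
        simpa using this
      set A' : Subring A := s.range.comap π with hA'
      set f' : ↥A' →+* k := f.comp A'.subtype with hf'
      have hkey : ∀ x : ↥A', f' x = 0 → (x : A) ∈ J := by
        rintro ⟨a, ha⟩ h0
        obtain ⟨y, hy⟩ := ha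
        have hya : y = 0 := by
          have := congrArg fb hy
          rw [hsval, hfbπ] at this
          rw [this]
          exact h0
        rw [hya, map_zero] at hy
        exact (Ideal.Quotient.eq_zero_iff_mem).mp hy.symm
      have hf's : Function.Surjective f' := by
        intro x
        obtain ⟨a, ha⟩ := Ideal.Quotient.mk_surjective (s x)
        refine ⟨⟨a, ⟨x, ha.symm⟩⟩, ?_⟩
        show f a = x
        rw [← hfbπ, ha, hsval]
      have h2' : RingHom.ker f' ^ 2 = ⊥ := by
        rw [pow_two]
        rw [eq_bot_iff]
        apply Ideal.mul_le.mpr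
        intro r hr s' hs'
        have hrJ : (r : A) ∈ J := hkey r (RingHom.mem_ker.mp hr)
        have hsJ : (s' : A) ∈ J := hkey s' (RingHom.mem_ker.mp hs')
        have hmem : (r : A) * (s' : A) ∈ J * J := Ideal.mul_mem_mul hrJ hsJ
        have hJJ : J * J ≤ (⊥ : Ideal A) := by
          rw [hJ, ← pow_add]
          calc RingHom.ker f ^ (m + 1 + (m + 1)) ≤ RingHom.ker f ^ (m + 2) :=
            Ideal.pow_le_pow_right (by omega)
          _ = ⊥ := hker
        have : (r : A) * (s' : A) = 0 := Ideal.mem_bot.mp (hJJ hmem)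
        rw [Ideal.mem_bot]
        apply Subtype.ext
        simpa using this
      have hchar' : ∀ m' : ℕ, (m' : ↥A') = 0 ↔ (m' : k) = 0 := by
        intro m'
        rw [← hchar m']
        constructor
        · intro h
          have := congrArg A'.subtype h
          rw [map_natCast, map_zero] at this
          exact this
        · intro h
          apply Subtype.ext
          rw [← map_natCast A'.subtype m'] at h
          simpa using h
      obtain ⟨g', hg'⟩ := aux_sec_sq f' hf's h2' hchar'
      refine ⟨A'.subtype.comp g', ?_⟩
      ext x
      show f (A'.subtype (g' x)) = x
      have := congrArg (fun h => h x) (congrArg DFunLike.coe hg')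
      exact this

end Devissage

/-- Let `F` be a perfect field, `k` a field extension of `F`, `A` a commutative
`F`-algebra, and `f : A → k` a surjective `F`-algebra homomorphism with nilpotent
kernel. Then `f` admits a ring-homomorphism section `g : k → A` with `f ∘ g = id`. -/
theorem stmt_19 (F : Type*) [Field F] [PerfectField F]
    (k : Type*) [Field k] [Algebra F k]
    (A : Type*) [CommRing A] [Algebra F A]
    (f : A →ₐ[F] k) (hf : Function.Surjective f)
    (hker : ∃ n : ℕ, 1 ≤ n ∧ (RingHom.ker (f : A →+* k)) ^ n = ⊥) :
    ∃ g : k →+* A, (f : A →+* k).comp g = RingHom.id k := by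
  obtain ⟨n, _, hker'⟩ := hker
  have hchar : ∀ m : ℕ, (m : A) = 0 ↔ (m : k) = 0 := by
    intro m
    constructor
    · intro h
      rw [← map_natCast (f : A →+* k) m, h, map_zero]
    · intro h
      have h1 : algebraMap F k (m : F) = 0 := by rw [map_natCast]; exact h
      have h2 : (m : F) = 0 := (algebraMap F k).injective (by rw [h1, map_zero])
      rw [← map_natCast (algebraMap F A) m, h2, map_zero]
  exact aux_devissage n A (f : A →+* k) hf hchar hker'
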